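/- Two-variable mean value theorem for divided differences: if f ∈ C^m on a product of open intervals, then for k ≤ j ≤ m and points x_1,...,x_{k+1}, y_1,...,y_{j−k+1} lying in closed subintervals J̃_1, J̃_2, there exists (x*, y*) ∈ J̃_1 × J̃_2 with f^{[k,j−k]}(x_1,...,x_{k+1}; y_1,...,y_{j−k+1}) = f^{(k,j−k)}(x*,y*) / (k!(j−k)!). -/

import Mathlib

open Set Finset

/-- Two-variable divided difference of `f`, taken at the (distinct) points
`x 0, ..., x k` in the first variable and `y 0, ..., y l` in the second. -/
noncomputable def divDiff2 {k l : ℕ} (f : ℝ → ℝ → ℝ)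
    (x : Fin (k + 1) → ℝ) (y : Fin (l + 1) → ℝ) : ℝ :=
  ∑ q, ∑ r, f (x q) (y r) /
    ((∏ p ∈ univ.erase q, (x q - x p)) * ∏ s ∈ univ.erase r, (y r - y s))

section Aux

open Polynomial Nat


-- iteratedDerivWithin on open set = iteratedDeriv
lemma itDW_open {s : Set ℝ} (hs : IsOpen s) (n : ℕ) (f : ℝ → ℝ) {x : ℝ} (hx : x ∈ s) :
    iteratedDerivWithin n f s x = iteratedDeriv n f x := by
  induction n generalizing f with
  | zero => simp
  | succ n ih =>
    rw [iteratedDerivWithin_succ', iteratedDeriv_succ',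
      iteratedDerivWithin_congr
        (fun y hy => derivWithin_of_isOpen hs hy) hx]
    exact ih _

lemma iteratedDeriv_zero_fun {n : ℕ} : iteratedDeriv n (fun _ : ℝ => (0:ℝ)) = fun _ => (0:ℝ) := by
  induction n with
  | zero => simp
  | succ n ih => rw [iteratedDeriv_succ']; simpa [deriv_const'] using ih

-- polynomial eval is smooth
lemma contDiff_eval (p : ℝ[X]) {n : ℕ∞} : ContDiff ℝ n fun x : ℝ => p.eval x := by
  induction p using Polynomial.induction_on' with
  | add p q hp hq => simpa [eval_add] using hp.add hq
  | monomial i a => simpa [eval_monomial] using (contDiff_const (c := a)).mul (contDiff_id.pow i)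

lemma iteratedDeriv_eval (p : ℝ[X]) (n : ℕ) :
    iteratedDeriv n (fun t : ℝ => p.eval t) = fun t => (derivative^[n] p).eval t := by
  induction n generalizing p with
  | zero => simp
  | succ n ih =>
    rw [iteratedDeriv_succ']
    have : deriv (fun t : ℝ => p.eval t) = fun t => p.derivative.eval t := by
      funext t; exact p.deriv
    rw [this, ih, Function.iterate_succ_apply]

lemma iterate_derivative_of_natDegree_le (n : ℕ) (p : ℝ[X]) (hp : p.natDegree ≤ n) :
    derivative^[n] p = C ((n ! : ℝ) * p.coeff n) := by
  induction n generalizing p with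
  | zero => simpa using (Polynomial.eq_C_of_natDegree_le_zero hp)
  | succ n ih =>
    rw [Function.iterate_succ_apply, ih p.derivative
      ((natDegree_derivative_le p).trans (by omega)), coeff_derivative]
    congr 1
    push_cast [Nat.factorial_succ]
    ring


lemma rolle_iter {a b c d : ℝ} (hsub : Icc c d ⊆ Ioo a b) :
    ∀ (n : ℕ) (h : ℝ → ℝ), ContDiffOn ℝ n h (Ioo a b) →
    ∀ (x : Fin (n+1) → ℝ), StrictMono x → (∀ q, x q ∈ Icc c d) → (∀ q, h (x q) = 0) →
    ∃ ξ ∈ Icc c d, iteratedDeriv n h ξ = 0 := by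
  intro n
  induction n with
  | zero =>
    intro h _ x _ hx hz
    exact ⟨x 0, hx 0, by simpa using hz 0⟩
  | succ n ih =>
    intro h hh x hmono hx hz
    have hdiff : DifferentiableOn ℝ h (Ioo a b) :=
      hh.differentiableOn (by simp)
    have H : ∀ i : Fin (n+1), ∃ ξ ∈ Ioo (x i.castSucc) (x i.succ), deriv h ξ = 0 := by
      intro i
      have hlt : x i.castSucc < x i.succ := hmono (Fin.castSucc_lt_succ (i := i))
      have hIcc : Icc (x i.castSucc) (x i.succ) ⊆ Icc c d :=
        Icc_subset_Icc (hx i.castSucc).1 (hx i.succ).2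
      exact exists_deriv_eq_zero hlt (hdiff.continuousOn.mono (hIcc.trans hsub))
        ((hz i.castSucc).trans (hz i.succ).symm)
    choose y hy1 hy2 using H
    have hymono : StrictMono y := by
      rw [Fin.strictMono_iff_lt_succ]
      intro i
      calc y i.castSucc < x i.castSucc.succ := (hy1 i.castSucc).2
        _ = x i.succ.castSucc := by rw [Fin.succ_castSucc]
        _ < y i.succ := (hy1 i.succ).1
    have hyIcc : ∀ i, y i ∈ Icc c d := fun i =>
      ⟨(hx i.castSucc).1.trans (hy1 i).1.le, (hy1 i).2.le.trans (hx i.succ).2⟩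
    have hd : ContDiffOn ℝ n (deriv h) (Ioo a b) :=
      hh.deriv_of_isOpen isOpen_Ioo (by exact_mod_cast le_refl (n+1))
    obtain ⟨ξ, hξ, hξ0⟩ := ih (deriv h) hd y hymono hyIcc hy2
    exact ⟨ξ, hξ, by rw [iteratedDeriv_succ']; exact hξ0⟩

lemma iteratedDeriv_sum_div {ι : Type*} [DecidableEq ι] {n : ℕ} {U : Set ℝ} (hU : IsOpen U)
    (s : Finset ι) (g : ι → ℝ → ℝ) (c : ι → ℝ)
    (hg : ∀ i ∈ s, ContDiffOn ℝ n (g i) U) {x : ℝ} (hx : x ∈ U) :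
    iteratedDeriv n (fun t => ∑ i ∈ s, g i t / c i) x
      = ∑ i ∈ s, iteratedDeriv n (g i) x / c i := by
  induction s using Finset.induction with
  | empty => simp [iteratedDeriv_zero_fun]
  | @insert a s ha ih =>
    have hga := hg a (mem_insert_self a s)
    have hgs : ∀ i ∈ s, ContDiffOn ℝ n (g i) U := fun i hi => hg i (mem_insert_of_mem hi)
    have hsum : ContDiffOn ℝ n (fun t => ∑ i ∈ s, g i t / c i) U := by
      apply ContDiffOn.sum
      intro i hi
      simpa [div_eq_inv_mul] using (contDiffOn_const (c := (c i)⁻¹)).mul (hgs i hi)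
    have hterm : ContDiffOn ℝ n (fun t => g a t / c a) U := by
      simpa [div_eq_inv_mul] using (contDiffOn_const (c := (c a)⁻¹)).mul hga
    have step1 : (fun t => ∑ i ∈ insert a s, g i t / c i)
        = (fun t => g a t / c a) + (fun t => ∑ i ∈ s, g i t / c i) := by
      funext t; simp [Finset.sum_insert ha]
    rw [← itDW_open hU n _ hx, step1,
      iteratedDerivWithin_add hx hU.uniqueDiffOn (hterm x hx) (hsum x hx),
      Finset.sum_insert ha, ← ih hgs]
    congr 1
    · have : (fun t => g a t / c a) = fun t => (c a)⁻¹ * g a t := by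
        funext t; rw [div_eq_inv_mul]
      rw [this, iteratedDerivWithin_const_mul hx hU.uniqueDiffOn _ (hga x hx),
        itDW_open hU n _ hx, div_eq_inv_mul]
    · exact itDW_open hU n _ hx

lemma mvt1 {a b c d : ℝ} {n : ℕ} {g : ℝ → ℝ} (hg : ContDiffOn ℝ n g (Ioo a b))
    (hsub : Icc c d ⊆ Ioo a b) (x : Fin (n+1) → ℝ) (hxinj : Function.Injective x)
    (hx : ∀ q, x q ∈ Icc c d) :
    ∃ ξ ∈ Icc c d,
      ∑ q, g (x q) / ∏ p ∈ univ.erase q, (x q - x p) = iteratedDeriv n g ξ / n ! := by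
  classical
  set Px : Fin (n+1) → ℝ := fun q => ∏ p ∈ univ.erase q, (x q - x p) with hPx
  have hPxne : ∀ q, Px q ≠ 0 := by
    intro q
    refine Finset.prod_ne_zero_iff.2 fun p hp => sub_ne_zero_of_ne ?_
    exact fun h => (Finset.mem_erase.1 hp).1 (hxinj h).symm
  set cq : Fin (n+1) → ℝ := fun q => g (x q) / Px q with hcq
  set P : ℝ[X] := ∑ q, C (cq q) * ∏ p ∈ univ.erase q, (X - C (x p)) with hP
  -- basis polynomials are monic of degree n
  have hmonic : ∀ q : Fin (n+1), (∏ p ∈ univ.erase q, (X - C (x p)) : ℝ[X]).Monic :=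
    fun q => monic_prod_of_monic _ _ fun p _ => monic_X_sub_C (x p)
  have hdegb : ∀ q : Fin (n+1), (∏ p ∈ univ.erase q, (X - C (x p)) : ℝ[X]).natDegree = n := by
    intro q
    rw [natDegree_prod_of_monic _ _ fun p _ => monic_X_sub_C (x p)]
    simp [Finset.card_erase_of_mem]
  have hPdeg : P.natDegree ≤ n := by
    apply natDegree_sum_le_of_forall_le
    intro q _
    refine (natDegree_mul_le).trans ?_
    simp [hdegb q]
  have hPcoeff : P.coeff n = ∑ q, cq q := by
    rw [hP, finset_sum_coeff]
    congr 1
    funext q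
    rw [coeff_C_mul]
    have : (∏ p ∈ univ.erase q, (X - C (x p)) : ℝ[X]).coeff n = 1 := by
      have := (hmonic q).coeff_natDegree
      rwa [hdegb q] at this
    rw [this, mul_one]
  -- P interpolates g at the nodes
  have hinterp : ∀ i, P.eval (x i) = g (x i) := by
    intro i
    rw [hP, eval_finset_sum]
    rw [Finset.sum_eq_single i]
    · simp only [eval_mul, eval_C, eval_prod, eval_sub, eval_X]
      rw [hcq]
      field_simp [hPxne i]
      rfl
    · intro q _ hqi
      rw [eval_mul]
      apply mul_eq_zero_of_right
      rw [eval_prod]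
      apply Finset.prod_eq_zero (Finset.mem_erase.2 ⟨Ne.symm hqi, Finset.mem_univ i⟩)
      simp
    · simp
  -- the error function
  set h : ℝ → ℝ := fun t => g t - P.eval t with hh
  have hhcd : ContDiffOn ℝ n h (Ioo a b) := hg.sub ((contDiff_eval P).contDiffOn)
  -- sorted nodes
  set σ := Tuple.sort x with hσ
  have hmono : StrictMono (x ∘ σ) :=
    (Tuple.monotone_sort x).strictMono_of_injective (hxinj.comp σ.injective)
  have hzero : ∀ q, h ((x ∘ σ) q) = 0 := by
    intro q; simp only [hh, Function.comp_apply, hinterp (σ q), sub_self]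
  obtain ⟨ξ, hξ, hξ0⟩ := rolle_iter hsub n h hhcd (x ∘ σ) hmono (fun q => hx (σ q)) hzero
  refine ⟨ξ, hξ, ?_⟩
  have hmem : ξ ∈ Ioo a b := hsub hξ
  have hsplit : iteratedDeriv n h ξ = iteratedDeriv n g ξ - iteratedDeriv n (fun t => P.eval t) ξ := by
    have : h = g - fun t => P.eval t := rfl
    rw [this, ← itDW_open isOpen_Ioo n _ hmem,
      iteratedDerivWithin_sub hmem isOpen_Ioo.uniqueDiffOn (hg ξ hmem) ((contDiff_eval P).contDiffOn ξ hmem),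
      itDW_open isOpen_Ioo n _ hmem, itDW_open isOpen_Ioo n _ hmem]
  have hPder : iteratedDeriv n (fun t => P.eval t) ξ = n ! * ∑ q, cq q := by
    rw [iteratedDeriv_eval, iterate_derivative_of_natDegree_le n P hPdeg, hPcoeff]
    exact eval_C
  rw [hsplit, hPder] at hξ0
  have hfact : (n ! : ℝ) ≠ 0 := Nat.cast_ne_zero.2 (Nat.factorial_ne_zero n)
  field_simp
  linarith [hξ0]


lemma partial_smooth {a₁ b₁ a₂ b₂ : ℝ} {m : ℕ} {f : ℝ → ℝ → ℝ}
    (hf : ContDiffOn ℝ m (fun p : ℝ × ℝ => f p.1 p.2) (Ioo a₁ b₁ ×ˢ Ioo a₂ b₂)) :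
    ∀ l, l ≤ m → ContDiffOn ℝ ((m - l : ℕ)) (fun p : ℝ × ℝ => iteratedDeriv l (f p.1) p.2)
      (Ioo a₁ b₁ ×ˢ Ioo a₂ b₂) := by
  have hS : IsOpen (Ioo a₁ b₁ ×ˢ Ioo a₂ b₂) := isOpen_Ioo.prod isOpen_Ioo
  intro l
  induction l with
  | zero =>
    intro _
    simpa using hf.of_le (by exact_mod_cast Nat.sub_le m 0)
  | succ l ih =>
    intro hl
    have hG := ih (Nat.le_of_succ_le hl)
    set G : ℝ × ℝ → ℝ := fun p => iteratedDeriv l (f p.1) p.2 with hGdef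
    have h1 : (1 : WithTop ℕ∞) ≤ ((m - l : ℕ) : WithTop ℕ∞) := by
      exact_mod_cast (by omega : 1 ≤ m - l)
    have hG' : ContDiffOn ℝ ((m - (l+1) : ℕ)) (fderiv ℝ G) (Ioo a₁ b₁ ×ˢ Ioo a₂ b₂) := by
      apply hG.fderiv_of_isOpen hS
      exact_mod_cast (by omega : m - (l+1) + 1 ≤ m - l)
    apply ContDiffOn.congr (hG'.clm_apply (contDiffOn_const (c := ((0:ℝ),(1:ℝ)))))
    intro p hp
    have hdiff : DifferentiableAt ℝ G p :=
      ((hG.differentiableOn (zero_lt_one.trans_le h1).ne') p hp).differentiableAt (hS.mem_nhds hp)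
    have hline : HasDerivAt (fun v : ℝ => (p.1, v)) ((0:ℝ),(1:ℝ)) p.2 :=
      (hasDerivAt_const _ _).prodMk (hasDerivAt_id _)
    have hcomp : HasDerivAt (fun v => G (p.1, v)) (fderiv ℝ G p ((0:ℝ),(1:ℝ))) p.2 := by
      have := hdiff.hasFDerivAt.comp_hasDerivAt p.2 hline
      exact this
    rw [iteratedDeriv_succ]
    exact hcomp.deriv

end Aux

/-- Two-variable mean value theorem for divided differences: if `f` is
`C^m` on `J₁ × J₂` and `k + l ≤ m`, then for distinct points `x_1, ..., x_{k+1} ∈ J̃₁`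
and `y_1, ..., y_{l+1} ∈ J̃₂` lying in closed subintervals, there is
`(x*, y*) ∈ J̃₁ × J̃₂` with
`f^{[k,l]}(x; y) = f^{(k,l)}(x*, y*) / (k! l!)`. -/
theorem stmt12 (a₁ b₁ a₂ b₂ : ℝ) (J₁ J₂ : Set ℝ)
    (hJ₁ : J₁ = Ioo a₁ b₁) (hJ₂ : J₂ = Ioo a₂ b₂)
    (m k l : ℕ) (hkl : k + l ≤ m)
    (f : ℝ → ℝ → ℝ)
    (hf : ContDiffOn ℝ m (fun p : ℝ × ℝ => f p.1 p.2) (J₁ ×ˢ J₂))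
    (c₁ d₁ c₂ d₂ : ℝ) (hsub₁ : Icc c₁ d₁ ⊆ J₁) (hsub₂ : Icc c₂ d₂ ⊆ J₂)
    (x : Fin (k + 1) → ℝ) (y : Fin (l + 1) → ℝ)
    (hxinj : Function.Injective x) (hyinj : Function.Injective y)
    (hx : ∀ q, x q ∈ Icc c₁ d₁) (hy : ∀ r, y r ∈ Icc c₂ d₂) :
    ∃ xs ∈ Icc c₁ d₁, ∃ ys ∈ Icc c₂ d₂,
      divDiff2 f x y =
        iteratedDeriv k (fun u => iteratedDeriv l (f u) ys) xs /
          (Nat.factorial k * Nat.factorial l) := by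
  classical
  subst hJ₁ hJ₂
  set Px : Fin (k+1) → ℝ := fun q => ∏ p ∈ univ.erase q, (x q - x p) with hPx
  set Py : Fin (l+1) → ℝ := fun r => ∏ s ∈ univ.erase r, (y r - y s) with hPy
  set H : ℝ → ℝ := fun v => ∑ q, f (x q) v / Px q with hH
  -- each slice is C^m in the second variable
  have hslice : ∀ q : Fin (k+1), ContDiffOn ℝ l (fun v => f (x q) v) (Ioo a₂ b₂) := by
    intro q
    have hmap : Ioo a₂ b₂ ⊆ (fun v : ℝ => ((x q : ℝ), v)) ⁻¹' (Ioo a₁ b₁ ×ˢ Ioo a₂ b₂) :=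
      fun v hv => ⟨hsub₁ (hx q), hv⟩
    have := hf.comp ((contDiff_const.prodMk contDiff_id).contDiffOn
      (s := Ioo a₂ b₂)) hmap
    exact (this.of_le (by exact_mod_cast (by omega : l ≤ m)))
  have hHc : ContDiffOn ℝ l H (Ioo a₂ b₂) := by
    apply ContDiffOn.sum
    intro q _
    simpa [div_eq_inv_mul] using (contDiffOn_const (c := (Px q)⁻¹)).mul (hslice q)
  -- first application of the 1D MVT, in the `y` variable
  obtain ⟨ys, hys, heq1⟩ := mvt1 hHc hsub₂ y hyinj hy
  -- rewrite divDiff2 as the divided difference of H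
  have hdd : divDiff2 f x y = ∑ r, H (y r) / Py r := by
    rw [divDiff2, Finset.sum_comm]
    refine Finset.sum_congr rfl fun r _ => ?_
    rw [hH, Finset.sum_div]
    exact Finset.sum_congr rfl fun q _ => (div_div _ _ _).symm
  -- compute iteratedDeriv of H as a sum
  have hsum : iteratedDeriv l H ys = ∑ q, iteratedDeriv l (f (x q)) ys / Px q := by
    have := iteratedDeriv_sum_div isOpen_Ioo (univ : Finset (Fin (k+1)))
      (fun q v => f (x q) v) Px (fun q _ => hslice q) (hsub₂ hys)
    simpa [hH] using this
  -- smoothness of u ↦ ∂_y^l f(u, ys)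
  have hgc : ContDiffOn ℝ k (fun u => iteratedDeriv l (f u) ys) (Ioo a₁ b₁) := by
    have hps := partial_smooth hf l (by omega)
    have hmap : Ioo a₁ b₁ ⊆ (fun u : ℝ => (u, ys)) ⁻¹' (Ioo a₁ b₁ ×ˢ Ioo a₂ b₂) :=
      fun u hu => ⟨hu, hsub₂ hys⟩
    have := hps.comp ((contDiff_id.prodMk contDiff_const).contDiffOn (s := Ioo a₁ b₁)) hmap
    exact this.of_le (by exact_mod_cast (by omega : k ≤ m - l))
  -- second application of the 1D MVT, in the `x` variable
  obtain ⟨xs, hxs, heq2⟩ := mvt1 hgc hsub₁ x hxinj hx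
  refine ⟨xs, hxs, ys, hys, ?_⟩
  rw [hdd, heq1, hsum]
  have : (∑ q, iteratedDeriv l (f (x q)) ys / Px q) = iteratedDeriv k (fun u => iteratedDeriv l (f u) ys) xs / k.factorial := heq2
  rw [this, div_div]
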